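/- Let N be an even squarefree positive integer, write N = 2N' with N' odd, let P be an odd prime with P ∤ N, let r ≥ 1 and d ≥ 1 be integers with 4d² | r²N² − 4P²N. Then (r²N² − 4P²N)/(4d²) = (r²N'² − 2P²N')/d² is not congruent to 0 or 1 modulo 4. -/
import Mathlib

lemma odd_sq_mod4 (x : ℤ) (h : x % 2 = 1) : x ^ 2 % 4 = 1 := by
  obtain ⟨k, hk⟩ : ∃ k, x = 2 * k + 1 := ⟨x / 2, by omega⟩
  have h2 : x ^ 2 = 4 * (k * k + k) + 1 := by subst hk; ring
  omega

/-- For even squarefree `N = 2N'` with `N'` odd, an odd prime `P ∤ N`, and `r, d ≥ 1`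
with `4d² ∣ r²N² − 4P²N`, the quotient `(r²N² − 4P²N)/(4d²) = (r²N'² − 2P²N')/d²`
is not congruent to 0 or 1 modulo 4. -/
theorem stmt5 (N N' : ℕ) (hN : Squarefree N) (hNeven : N = 2 * N') (hN' : Odd N')
    (P : ℕ) (hP : P.Prime) (hPodd : P ≠ 2) (hPN : ¬ P ∣ N)
    (r d : ℕ) (hr : 1 ≤ r) (hd : 1 ≤ d)
    (hdvd : ((4 : ℤ) * (d : ℤ) ^ 2) ∣ ((r : ℤ) ^ 2 * (N : ℤ) ^ 2 - 4 * (P : ℤ) ^ 2 * (N : ℤ))) :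
    ((r : ℤ) ^ 2 * (N : ℤ) ^ 2 - 4 * (P : ℤ) ^ 2 * (N : ℤ)) / (4 * (d : ℤ) ^ 2)
      = ((r : ℤ) ^ 2 * (N' : ℤ) ^ 2 - 2 * (P : ℤ) ^ 2 * (N' : ℤ)) / (d : ℤ) ^ 2 ∧
    ¬ ((((r : ℤ) ^ 2 * (N : ℤ) ^ 2 - 4 * (P : ℤ) ^ 2 * (N : ℤ)) / (4 * (d : ℤ) ^ 2)) % 4 = 0 ∨
       (((r : ℤ) ^ 2 * (N : ℤ) ^ 2 - 4 * (P : ℤ) ^ 2 * (N : ℤ)) / (4 * (d : ℤ) ^ 2)) % 4 = 1) := by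
  have hNZ : (N : ℤ) = 2 * (N' : ℤ) := by exact_mod_cast hNeven
  set M : ℤ := (r : ℤ) ^ 2 * (N' : ℤ) ^ 2 - 2 * (P : ℤ) ^ 2 * (N' : ℤ) with hM
  have hA : (r : ℤ) ^ 2 * (N : ℤ) ^ 2 - 4 * (P : ℤ) ^ 2 * (N : ℤ) = 4 * M := by
    rw [hNZ]; ring
  have hd0 : (d : ℤ) ≠ 0 := by positivity
  have heq : ((r : ℤ) ^ 2 * (N : ℤ) ^ 2 - 4 * (P : ℤ) ^ 2 * (N : ℤ)) / (4 * (d : ℤ) ^ 2)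
      = M / (d : ℤ) ^ 2 := by
    rw [hA, Int.mul_ediv_mul_of_pos _ _ (by norm_num : (0:ℤ) < 4)]
  have hd2 : ((d : ℤ) ^ 2) ∣ M := by
    rw [hA] at hdvd
    exact (mul_dvd_mul_iff_left (by norm_num : (4:ℤ) ≠ 0)).mp hdvd
  obtain ⟨Q, hQ⟩ := hd2
  have hQval : M / (d : ℤ) ^ 2 = Q := by
    rw [hQ, Int.mul_ediv_cancel_left _ (pow_ne_zero 2 hd0)]
  refine ⟨heq, ?_⟩
  rw [heq, hQval]
  -- parity facts
  have hN'odd : (N' : ℤ) % 2 = 1 := by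
    obtain ⟨k, hk⟩ := hN'
    have : (N' : ℤ) = 2 * (k : ℤ) + 1 := by exact_mod_cast hk
    omega
  have hPoddZ : (P : ℤ) % 2 = 1 := by
    have := hP.two_le
    have h2 : ¬ (2 ∣ P) := fun h => hPodd ((Nat.prime_dvd_prime_iff_eq Nat.prime_two hP).mp h).symm
    have : ¬ ((2:ℤ) ∣ (P:ℤ)) := by exact_mod_cast h2
    omega
  have hPN'odd : ((P : ℤ) ^ 2 * (N' : ℤ)) % 2 = 1 := by
    have h1 := Int.mul_emod ((P:ℤ)^2) (N':ℤ) 2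
    have h2 : (P:ℤ) ^ 2 % 2 = 1 := by
      obtain ⟨k, hk⟩ : ∃ k, (P:ℤ) = 2 * k + 1 := ⟨(P:ℤ)/2, by omega⟩
      have : (P:ℤ) ^ 2 = 2 * (2 * k * k + 2 * k) + 1 := by rw [hk]; ring
      omega
    rw [h2, hN'odd] at h1
    simpa using h1
  rcases Int.even_or_odd (r : ℤ) with ⟨c, hc⟩ | ⟨c, hc⟩
  · -- r even : M = 2 * K with K odd, hence Q ≡ 2 mod 4
    set K : ℤ := 2 * c ^ 2 * (N' : ℤ) ^ 2 - (P : ℤ) ^ 2 * (N' : ℤ) with hK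
    have hMK : M = 2 * K := by rw [hM, hK, hc]; ring
    have hKodd : K % 2 = 1 := by
      have : K = 2 * (c ^ 2 * (N' : ℤ) ^ 2) - (P : ℤ) ^ 2 * (N' : ℤ) := by rw [hK]; ring
      omega
    have hdodd : (d : ℤ) % 2 = 1 := by
      by_contra h
      obtain ⟨e, he⟩ : ∃ e, (d : ℤ) = 2 * e := ⟨(d:ℤ) / 2, by omega⟩
      have : M = 4 * (e ^ 2 * Q) := by rw [hQ, he]; ring
      omega
    obtain ⟨w, hw⟩ : ∃ w, (d : ℤ) ^ 2 = 4 * w + 1 := ⟨(d:ℤ)^2 / 4, by have := odd_sq_mod4 (d:ℤ) hdodd; omega⟩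
    have hQeven : Q % 2 = 0 := by
      by_contra h
      obtain ⟨s, hs⟩ : ∃ s, Q = 2 * s + 1 := ⟨Q / 2, by omega⟩
      have : M = 2 * (4 * w * s + 2 * w + s) + 1 := by rw [hQ, hw, hs]; ring
      omega
    obtain ⟨Q', hQ'⟩ : ∃ Q', Q = 2 * Q' := ⟨Q / 2, by omega⟩
    have hKQ' : K = (d : ℤ) ^ 2 * Q' := by
      have : 2 * K = 2 * ((d : ℤ) ^ 2 * Q') := by rw [← hMK, hQ, hQ']; ring
      omega
    have hQ'odd : Q' % 2 = 1 := by
      by_contra h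
      obtain ⟨s, hs⟩ : ∃ s, Q' = 2 * s := ⟨Q' / 2, by omega⟩
      have : K = 2 * ((d : ℤ) ^ 2 * s) := by rw [hKQ', hs]; ring
      omega
    omega
  · -- r odd : M ≡ 3 mod 4, d odd, so Q ≡ 3 mod 4
    have hrodd : (r : ℤ) % 2 = 1 := by omega
    have hrN'odd : ((r : ℤ) * (N' : ℤ)) % 2 = 1 := by
      have h1 := Int.mul_emod (r:ℤ) (N':ℤ) 2
      rw [hrodd, hN'odd] at h1
      simpa using h1
    have hX := odd_sq_mod4 ((r:ℤ) * (N':ℤ)) hrN'odd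
    have hM4 : M % 4 = 3 := by
      have hMe : M = ((r:ℤ) * (N':ℤ)) ^ 2 - 2 * ((P : ℤ) ^ 2 * (N' : ℤ)) := by rw [hM]; ring
      omega
    have hdodd : (d : ℤ) % 2 = 1 := by
      by_contra h
      obtain ⟨e, he⟩ : ∃ e, (d : ℤ) = 2 * e := ⟨(d:ℤ) / 2, by omega⟩
      have : M = 4 * (e ^ 2 * Q) := by rw [hQ, he]; ring
      omega
    obtain ⟨w, hw⟩ : ∃ w, (d : ℤ) ^ 2 = 4 * w + 1 := ⟨(d:ℤ)^2 / 4, by have := odd_sq_mod4 (d:ℤ) hdodd; omega⟩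
    have : M = Q + 4 * (w * Q) := by rw [hQ, hw]; ring
    omega
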